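/- (Gibbs variational principle.) Let L be a self-adjoint (Hermitian) complex n×n matrix and let ρ be a density matrix on ℂ^n. Then Re tr(ρ L) ≥ S(ρ) − log(Re tr(exp(−L))), where exp is the matrix exponential. -/

import Mathlib

open scoped BigOperators ComplexOrder


/-- Classical Gibbs inequality. -/
lemma classical_gibbs {k : ℕ} (p a : Fin k → ℝ) (hp : ∀ i, 0 ≤ p i) (hsum : ∑ i, p i = 1)
    (Z : ℝ) (hZ : ∑ i, Real.exp (-a i) ≤ Z) :
    ∑ i, p i * a i ≥ (-∑ i, p i * Real.log (p i)) - Real.log Z := by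
  have hne : Nonempty (Fin k) := by
    by_contra h
    rw [not_nonempty_iff] at h
    simp [Finset.univ_eq_empty] at hsum
  have hZ0 : 0 < Z := lt_of_lt_of_le (Finset.sum_pos (fun i _ => Real.exp_pos _)
    Finset.univ_nonempty) hZ
  -- reduce to sum over support
  set s : Finset (Fin k) := Finset.univ.filter (fun i => p i ≠ 0) with hs
  have hps : ∀ i ∈ s, 0 < p i := fun i hi => lt_of_le_of_ne (hp i)
    (Ne.symm (Finset.mem_filter.mp hi).2)
  have key : ∀ i ∈ s, p i - Real.exp (-a i) / Z ≤ p i * (a i + Real.log (p i) + Real.log Z) := by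
    intro i hi
    have hpi := hps i hi
    have hx : 0 < Real.exp (-a i) / (p i * Z) := by positivity
    have hlog := Real.log_le_sub_one_of_pos hx
    rw [Real.log_div (by positivity) (by positivity), Real.log_exp,
      Real.log_mul (ne_of_gt hpi) (ne_of_gt hZ0)] at hlog
    have h2 : Real.exp (-a i) / (p i * Z) * p i = Real.exp (-a i) / Z := by
      field_simp
    nlinarith [mul_le_mul_of_nonneg_left hlog (le_of_lt hpi)]
  have hsum_s : ∑ i ∈ s, p i = 1 := by
    rw [← hsum]
    apply Finset.sum_subset (Finset.filter_subset _ _)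
    intro i _ hi
    simp [hs] at hi; exact hi
  have hE : ∑ i ∈ s, Real.exp (-a i) / Z ≤ 1 := by
    rw [← Finset.sum_div, div_le_one hZ0]
    exact le_trans (Finset.sum_le_sum_of_subset_of_nonneg (Finset.filter_subset _ _)
      (fun i _ _ => (Real.exp_pos _).le)) hZ
  have main : 0 ≤ ∑ i ∈ s, p i * (a i + Real.log (p i) + Real.log Z) := by
    calc (0:ℝ) = 1 - 1 := by ring
    _ ≤ ∑ i ∈ s, p i - ∑ i ∈ s, Real.exp (-a i) / Z := by
        rw [hsum_s]; linarith
    _ = ∑ i ∈ s, (p i - Real.exp (-a i) / Z) := by rw [Finset.sum_sub_distrib]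
    _ ≤ _ := Finset.sum_le_sum key
  have hext : ∑ i ∈ s, p i * (a i + Real.log (p i) + Real.log Z)
      = ∑ i, p i * (a i + Real.log (p i) + Real.log Z) := by
    apply Finset.sum_subset (Finset.filter_subset _ _)
    intro i _ hi
    simp [hs] at hi; simp [hi]
  rw [hext] at main
  have expand : ∑ i, p i * (a i + Real.log (p i) + Real.log Z)
      = ∑ i, p i * a i + ∑ i, p i * Real.log (p i) + Real.log Z := by
    simp only [mul_add, Finset.sum_add_distrib, ← Finset.sum_mul, hsum, one_mul]
  rw [expand] at main
  linarith


/-- Von Neumann entropy: `-∑ λᵢ log λᵢ` over the eigenvalues of a Hermitian matrix. -/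
noncomputable def vonNeumannEntropy {n : ℕ} (ρ : Matrix (Fin n) (Fin n) ℂ) : ℝ :=
  if h : ρ.IsHermitian then -∑ i, h.eigenvalues i * Real.log (h.eigenvalues i) else 0

/-- **Gibbs variational principle.** For a Hermitian matrix `L` and a density matrix `ρ`,
`Re tr(ρ L) ≥ S(ρ) - log (Re tr (exp (-L)))`. -/
theorem gibbs_variational_principle {n : ℕ} (L ρ : Matrix (Fin n) (Fin n) ℂ)
    (hL : L.IsHermitian) (hρ : ρ.PosSemidef) (hρtr : ρ.trace = 1) :
    ((ρ * L).trace).re ≥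
      vonNeumannEntropy ρ - Real.log (((NormedSpace.exp (-L)).trace).re) := by
  classical
  have hρ' : ρ.IsHermitian := hρ.1
  set U : Matrix (Fin n) (Fin n) ℂ := ↑hρ'.eigenvectorUnitary with hUdef
  set V : Matrix (Fin n) (Fin n) ℂ := ↑hL.eigenvectorUnitary with hVdef
  have hU1 : star U * U = 1 := Matrix.mem_unitaryGroup_iff'.mp hρ'.eigenvectorUnitary.2
  have hU2 : U * star U = 1 := Matrix.mem_unitaryGroup_iff.mp hρ'.eigenvectorUnitary.2
  have hV1 : star V * V = 1 := Matrix.mem_unitaryGroup_iff'.mp hL.eigenvectorUnitary.2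
  have hV2 : V * star V = 1 := Matrix.mem_unitaryGroup_iff.mp hL.eigenvectorUnitary.2
  set p := hρ'.eigenvalues with hpdef
  set ε := hL.eigenvalues with hεdef
  set W : Matrix (Fin n) (Fin n) ℂ := star V * U with hWdef
  have hWs : star W = star U * V := by rw [hWdef, star_mul, star_star]
  have hW1 : star W * W = 1 := by
    rw [hWs, hWdef, mul_assoc, ← mul_assoc V, hV2, one_mul, hU1]
  have hW2 : W * star W = 1 := by
    rw [hWs, hWdef, mul_assoc, ← mul_assoc U, hU2, one_mul, hV1]
  set w : Fin n → Fin n → ℝ := fun i j => Complex.normSq (W j i) with hwdef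
  have hwcol : ∀ i, ∑ j, w i j = 1 := by
    intro i
    have h := congrFun (congrFun hW1 i) i
    simp only [Matrix.mul_apply, Matrix.star_apply, Matrix.one_apply_eq] at h
    have h2 : (↑(∑ j, w i j) : ℂ) = 1 := by
      push_cast
      rw [← h]
      exact Finset.sum_congr rfl fun j _ => by
        simp [hwdef, Complex.star_def, Complex.normSq_eq_conj_mul_self]
    exact_mod_cast h2
  have hwrow : ∀ j, ∑ i, w i j = 1 := by
    intro j
    have h := congrFun (congrFun hW2 j) j
    simp only [Matrix.mul_apply, Matrix.star_apply, Matrix.one_apply_eq] at h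
    have h2 : (↑(∑ i, w i j) : ℂ) = 1 := by
      push_cast
      rw [← h]
      exact Finset.sum_congr rfl fun i _ => by
        simp [hwdef, Complex.star_def, Complex.normSq_eq_conj_mul_self, mul_comm]
    exact_mod_cast h2
  set Dp : Matrix (Fin n) (Fin n) ℂ := Matrix.diagonal (RCLike.ofReal ∘ p) with hDp
  set Dε : Matrix (Fin n) (Fin n) ℂ := Matrix.diagonal (RCLike.ofReal ∘ ε) with hDε
  have hcyc : ∀ (X A B : Matrix (Fin n) (Fin n) ℂ),
      ((X * A * star X) * B).trace = (A * (star X * B * X)).trace := by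
    intro X A B
    calc ((X * A * star X) * B).trace = ((X * A) * (star X * B)).trace := by
          rw [mul_assoc, mul_assoc]
      _ = ((star X * B) * (X * A)).trace := Matrix.trace_mul_comm _ _
      _ = (((star X * B) * X) * A).trace := by rw [← mul_assoc]
      _ = (A * (star X * B * X)).trace := Matrix.trace_mul_comm _ _
  have hρspec : ρ = U * Dp * star U := hρ'.spectral_theorem
  have hLspec : L = V * Dε * star V := hL.spectral_theorem
  have hM : star U * L * U = star W * (Dε * W) := by
    rw [hLspec, hWs, hWdef]
    simp only [mul_assoc]
  have htrdiag : ∀ (d : Fin n → ℂ) (M : Matrix (Fin n) (Fin n) ℂ),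
      (Matrix.diagonal d * M).trace = ∑ i, d i * M i i := by
    intro d M
    simp [Matrix.trace, Matrix.diag, Matrix.diagonal_mul]
  set a : Fin n → ℝ := fun i => ∑ j, w i j * ε j with hadef
  have hDW : ∀ j i, (Dε * W) j i = ((ε j : ℝ) : ℂ) * W j i := by
    intro j i
    rw [hDε, Matrix.diagonal_mul]
    simp
  have hMii : ∀ i, (star W * (Dε * W)) i i = ((a i : ℝ) : ℂ) := by
    intro i
    rw [Matrix.mul_apply]
    push_cast [hadef]
    refine Finset.sum_congr rfl fun j _ => ?_
    rw [hDW j i, Matrix.star_apply, hwdef]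
    simp only [Complex.star_def, Complex.normSq_eq_conj_mul_self]
    ring
  have htrρL : ((ρ * L).trace) = ((∑ i, p i * a i : ℝ) : ℂ) := by
    rw [hρspec, hcyc, hM, htrdiag]
    push_cast
    exact Finset.sum_congr rfl fun i _ => by rw [hMii]; simp
  have htrρ : ρ.trace = ∑ i, ((p i : ℝ) : ℂ) := by
    calc ρ.trace = ((U * Dp * star U) * 1).trace := by rw [← hρspec, mul_one]
      _ = (Dp * (star U * 1 * U)).trace := hcyc U Dp 1
      _ = ∑ i, ((p i : ℝ) : ℂ) := by
          rw [mul_one, hU1, mul_one, hDp, Matrix.trace_diagonal]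
          simp
  have hp1 : ∑ i, p i = 1 := by
    rw [hρtr] at htrρ
    exact_mod_cast htrρ.symm
  have hVunit : IsUnit V := ⟨⟨V, star V, hV2, hV1⟩, rfl⟩
  have hVinv : V⁻¹ = star V := Matrix.inv_eq_left_inv hV1
  have hnegL : -L = V * (-Dε) * V⁻¹ := by
    rw [hVinv, hLspec]
    simp [mul_neg, neg_mul]
  have hexpL : NormedSpace.exp (-L) = V * NormedSpace.exp (-Dε) * star V := by
    rw [hnegL, Matrix.exp_conj V (-Dε) hVunit, hVinv]
  have hexpDε : NormedSpace.exp (-Dε) =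
      Matrix.diagonal (fun j => Complex.exp (-(ε j : ℂ))) := by
    have hneg : -Dε = Matrix.diagonal (fun j => ((-(ε j) : ℝ) : ℂ)) := by
      rw [hDε, Matrix.diagonal_neg]
      congr 1
      funext j
      simp
    rw [hneg, Matrix.exp_diagonal, Pi.exp_def]
    congr 1
    funext j
    rw [← Complex.exp_eq_exp_ℂ]
    push_cast
    rfl
  have htrexp : (NormedSpace.exp (-L)).trace = ∑ j, Complex.exp (-(ε j : ℂ)) := by
    rw [hexpL, hexpDε, Matrix.trace_mul_cycle, hV1, one_mul, Matrix.trace_diagonal]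
  set Z : ℝ := ∑ j, Real.exp (-ε j) with hZdef
  have hZre : ((NormedSpace.exp (-L)).trace).re = Z := by
    rw [htrexp]
    have h : ∑ j, Complex.exp (-(ε j : ℂ)) = ((Z : ℝ) : ℂ) := by
      rw [hZdef]
      push_cast
      rfl
    rw [h, Complex.ofReal_re]
  have hwnn : ∀ i j, 0 ≤ w i j := fun i j => Complex.normSq_nonneg _
  have hjensen : ∀ i, Real.exp (-a i) ≤ ∑ j, w i j * Real.exp (-ε j) := by
    intro i
    have h1 : -a i = ∑ j ∈ Finset.univ, w i j • (-ε j) := by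
      rw [hadef]
      simp [smul_eq_mul, mul_neg, Finset.sum_neg_distrib]
    calc Real.exp (-a i) = Real.exp (∑ j ∈ Finset.univ, w i j • (-ε j)) := by rw [h1]
      _ ≤ ∑ j ∈ Finset.univ, w i j • Real.exp (-ε j) :=
          convexOn_exp.map_sum_le (fun j _ => hwnn i j) (hwcol i) (fun j _ => Set.mem_univ _)
      _ = ∑ j, w i j * Real.exp (-ε j) := by simp [smul_eq_mul]
  have hpeierls : ∑ i, Real.exp (-a i) ≤ Z := by
    calc ∑ i, Real.exp (-a i) ≤ ∑ i, ∑ j, w i j * Real.exp (-ε j) :=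
          Finset.sum_le_sum (fun i _ => hjensen i)
      _ = ∑ j, (∑ i, w i j) * Real.exp (-ε j) := by
          rw [Finset.sum_comm]
          simp [Finset.sum_mul]
      _ = Z := by simp [hwrow, hZdef]
  have main := classical_gibbs p a (fun i => hρ.eigenvalues_nonneg i) hp1 Z hpeierls
  have hre : ((ρ * L).trace).re = ∑ i, p i * a i := by rw [htrρL, Complex.ofReal_re]
  rw [hre, hZre]
  simp only [vonNeumannEntropy, dif_pos hρ']
  exact main
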